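/- For n ≥ 1, the function Θ_n(β) = 1 - β_n + Π_{l=1}^n β_l + Σ_{k=1}^n |(2-β_{k-1})β_k - 1|·Π_{l=k+1}^n β_l (with β_0 = 0) over β ∈ [0,1]^n attains its minimum value 2/(n+1) at β_k = k/(k+1) for k = 1,…,n. -/
import Mathlib


/-- The tight residual bound Θ_n(β) for Halpern's iteration applied to linear
nonexpansive maps:
Θ_n(β) = 1 - β_n + Π_{l=1}^n β_l + Σ_{k=1}^n |(2-β_{k-1})β_k - 1| Π_{l=k+1}^n β_l. -/
noncomputable def Theta (n : ℕ) (β : ℕ → ℝ) : ℝ :=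
  1 - β n + ∏ l ∈ Finset.Icc 1 n, β l +
    ∑ k ∈ Finset.Icc 1 n, |(2 - β (k-1)) * β k - 1| * ∏ l ∈ Finset.Icc (k+1) n, β l

lemma prod_ratio (n : ℕ) : ∏ l ∈ Finset.Icc 1 n, ((l : ℝ)/((l : ℝ) + 1)) = 1/((n : ℝ)+1) := by
  induction n with
  | zero => simp
  | succ m ih =>
    rw [Finset.prod_Icc_succ_top (by omega), ih]
    have h1 : (m : ℝ) + 1 ≠ 0 := by positivity
    have h2 : (m : ℝ) + 2 ≠ 0 := by positivity
    push_cast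
    field_simp

/-- For n ≥ 1, the function Θ_n over β ∈ [0,1]^n (with β₀ = 0) attains
its minimum value 2/(n+1) at β_k = k/(k+1). -/
theorem stmt16 (n : ℕ) (hn : 1 ≤ n) :
    (∀ β : ℕ → ℝ, β 0 = 0 → (∀ k, β k ∈ Set.Icc (0 : ℝ) 1) →
      2/((n : ℝ) + 1) ≤ Theta n β) ∧
    Theta n (fun k => (k : ℝ)/((k : ℝ) + 1)) = 2/((n : ℝ) + 1) := by
  have hn1 : (0 : ℝ) < (n : ℝ) + 1 := by positivity
  constructor
  · intro β hβ0 hβmem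
    set y : ℕ → ℝ := fun k => ∏ l ∈ Finset.Icc k n, β l with hy_def
    have hstep : ∀ k, k ≤ n → y k = β k * y (k+1) := by
      intro k hk
      simp only [hy_def]
      rw [Finset.Icc_add_one_left_eq_Ioc, ← Finset.Ioc_insert_left hk, Finset.prod_insert (by simp)]
    have hy0 : y 0 = 0 := by
      rw [hstep 0 (Nat.zero_le n), hβ0, zero_mul]
    have hyn1 : y (n+1) = 1 := by
      simp only [hy_def]
      rw [Finset.Icc_eq_empty_of_lt (Nat.lt_succ_self n), Finset.prod_empty]
    have hy_nonneg : ∀ k, 0 ≤ y k := fun k =>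
      Finset.prod_nonneg (fun l _ => (hβmem l).1)
    -- rewrite Theta in terms of y
    have hβn : β n = y n := by rw [hstep n le_rfl, hyn1, mul_one]
    have hTheta : Theta n β
        = 1 - y n + y 1 + ∑ k ∈ Finset.Ioc 0 n, |y (k+1) - 2 * y k + y (k-1)| := by
      unfold Theta
      rw [hβn, ← Finset.Icc_add_one_left_eq_Ioc]
      congr 1
      apply Finset.sum_congr rfl
      intro k hk
      rw [Finset.mem_Icc] at hk
      obtain ⟨hk1, hk2⟩ := hk
      have e1 : y k = β k * y (k+1) := hstep k hk2
      have e2 : y (k-1) = β (k-1) * y k := by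
        have h := hstep (k-1) (by omega)
        rwa [Nat.sub_add_cancel hk1] at h
      have hprod : ∏ l ∈ Finset.Icc (k+1) n, β l = y (k+1) := rfl
      have habs : |(2 - β (k-1)) * β k - 1| * y (k+1)
          = |((2 - β (k-1)) * β k - 1) * y (k+1)| := by
        rw [abs_mul, abs_of_nonneg (hy_nonneg (k+1))]
      rw [hprod, habs, show ((2 - β (k-1)) * β k - 1) * y (k+1)
          = -(y (k+1) - 2 * y k + y (k-1)) by
        rw [e2]; linear_combination (β (k-1) - 2) * e1, abs_neg]
    set d : ℕ → ℝ := fun k => y (k+1) - y k with hd_def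
    have hsum_d : ∑ k ∈ Finset.range (n+1), d k = 1 := by
      rw [Finset.sum_range_sub y, hyn1, hy0, sub_zero]
    obtain ⟨j, hj_le, hj⟩ : ∃ j ≤ n, 1/((n:ℝ)+1) ≤ d j := by
      by_contra h
      push_neg at h
      have hlt : ∑ k ∈ Finset.range (n+1), d k
          < ∑ _k ∈ Finset.range (n+1), 1/((n:ℝ)+1) := by
        apply Finset.sum_lt_sum_of_nonempty (by simp)
        intro k hk
        exact h k (by simpa using Nat.lt_succ_iff.mp (Finset.mem_range.mp hk))
      rw [hsum_d, Finset.sum_const, Finset.card_range] at hlt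
      have : ((n:ℝ)+1) * (1/((n:ℝ)+1)) = 1 := by field_simp
      rw [nsmul_eq_mul] at hlt
      push_cast at hlt
      nlinarith
    have hA : ∀ m, m ≤ n → d m ≤ d 0 + ∑ k ∈ Finset.Ioc 0 m, |d k - d (k-1)| := by
      intro m
      induction m with
      | zero => simp
      | succ m ih =>
        intro hm
        rw [Finset.sum_Ioc_succ_top (Nat.zero_le m)]
        have h1 := ih (by omega)
        have h2 : d (m+1) - d m ≤ |d (m+1) - d (m+1-1)| := by
          simpa using le_abs_self (d (m+1) - d m)
        linarith
    have hB : ∀ m, j ≤ m → m ≤ n → d j ≤ d m + ∑ k ∈ Finset.Ioc j m, |d k - d (k-1)| := by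
      intro m
      induction m with
      | zero =>
        intro h1 h2
        simp_all
      | succ m ih =>
        intro h1 h2
        rcases Nat.eq_or_lt_of_le h1 with he | hlt
        · simp [← he]
        · have hjm : j ≤ m := by omega
          rw [Finset.sum_Ioc_succ_top hjm]
          have h3 := ih hjm (by omega)
          have h4 : d m - d (m+1) ≤ |d (m+1) - d (m+1-1)| := by
            rw [show m+1-1 = m from rfl, abs_sub_comm]
            exact le_abs_self _
          linarith
    have hsplit : ∑ k ∈ Finset.Ioc 0 j, |d k - d (k-1)| + ∑ k ∈ Finset.Ioc j n, |d k - d (k-1)|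
        = ∑ k ∈ Finset.Ioc 0 n, |d k - d (k-1)| :=
      Finset.sum_Ioc_consecutive _ (Nat.zero_le j) hj_le
    have hAq := hA j hj_le
    have hBq := hB n hj_le le_rfl
    have hterm_eq : ∀ k ∈ Finset.Ioc 0 n, |y (k+1) - 2 * y k + y (k-1)| = |d k - d (k-1)| := by
      intro k hk
      rw [Finset.mem_Ioc] at hk
      congr 1
      simp only [hd_def]
      rw [Nat.sub_add_cancel hk.1]
      ring
    rw [hTheta, Finset.sum_congr rfl hterm_eq]
    have hd0 : y 1 = d 0 := by simp [hd_def, hy0]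
    have hdn : 1 - y n = d n := by simp [hd_def, hyn1]
    rw [hd0, hdn, ← hsplit]
    have h2j : 2/((n:ℝ)+1) ≤ d j + d j := by
      rw [div_le_iff₀ hn1]
      rw [div_le_iff₀ hn1] at hj
      nlinarith
    have hsum := add_le_add hAq hBq
    have test : (d 0 + ∑ k ∈ Finset.Ioc 0 j, |d k - d (k - 1)|) + (d n + ∑ k ∈ Finset.Ioc j n, |d k - d (k - 1)|) = d n + d 0 + (∑ k ∈ Finset.Ioc 0 j, |d k - d (k - 1)| + ∑ k ∈ Finset.Ioc j n, |d k - d (k - 1)|) := by ring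
    exact h2j.trans (hsum.trans (le_of_eq test))
  · unfold Theta
    have hzero : ∀ k ∈ Finset.Icc 1 n,
        |(2 - ((k-1 : ℕ) : ℝ)/(((k-1 : ℕ) : ℝ) + 1)) * ((k : ℝ)/((k : ℝ)+1)) - 1|
          * ∏ l ∈ Finset.Icc (k+1) n, ((l : ℝ)/((l : ℝ)+1)) = 0 := by
      intro k hk
      rw [Finset.mem_Icc] at hk
      have hk1 : 1 ≤ k := hk.1
      have hc : (1 : ℝ) ≤ (k : ℝ) := by exact_mod_cast hk1
      have hcast : ((k-1 : ℕ) : ℝ) = (k : ℝ) - 1 := by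
        push_cast [hk1]; ring
      rw [hcast]
      have hk0 : (k : ℝ) ≠ 0 := by linarith
      have hk01 : (k : ℝ) + 1 ≠ 0 := by linarith
      have : (2 - ((k : ℝ) - 1)/(((k : ℝ) - 1) + 1)) * ((k : ℝ)/((k : ℝ)+1)) - 1 = 0 := by
        have : ((k : ℝ) - 1) + 1 = (k : ℝ) := by ring
        rw [this]
        field_simp
        ring
      rw [this, abs_zero, zero_mul]
    rw [Finset.sum_congr rfl hzero, prod_ratio]
    simp only [Finset.sum_const_zero, add_zero]
    field_simp
    ring
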